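/- The projection Π_Q onto the parity-constrained subspace W_Q is a contraction for the sup norm over the hypercube: ‖Π_Q p‖_∞ ≤ ‖p‖_∞, where ‖p‖_∞ = sup_{x∈{−1,1}^n} |p(x)|. -/

import Mathlib

open MvPolynomial

noncomputable section

/-- The sign vector in `{-1,1}^n` associated to a boolean vector. -/
def signv {n : ℕ} (x : Fin n → Bool) : Fin n → ℝ := fun i => if x i then 1 else -1

/-- The projection `Π_Q` onto the span of monomials `x^α` with `∑_{i ∈ I} α_i` odd
for every `I ∈ Q`. -/
def parityProj {n : ℕ} (Q : Finset (Finset (Fin n))) (p : MvPolynomial (Fin n) ℝ) :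
    MvPolynomial (Fin n) ℝ :=
  ∑ α ∈ p.support,
    if ∀ I ∈ Q, Odd (∑ i ∈ I, α i) then monomial α (p.coeff α) else 0

/-- The sup norm of a polynomial over the hypercube `{-1,1}^n`. -/
def supNorm {n : ℕ} (p : MvPolynomial (Fin n) ℝ) : ℝ :=
  sSup {c : ℝ | ∃ x : Fin n → Bool, c = |eval (signv x) p|}

namespace ParityAux

variable {n : ℕ}

/-- Flip the coordinates of `x` lying in some member of `S`. -/
def flip (x : Fin n → Bool) (S : Finset (Finset (Fin n))) : Fin n → Bool :=
  fun i => xor (x i) (decide (∃ I ∈ S, i ∈ I))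

/-- The sign change factor induced by flipping. -/
def e (S : Finset (Finset (Fin n))) (i : Fin n) : ℝ :=
  if ∃ I ∈ S, i ∈ I then -1 else 1

lemma signv_flip (x : Fin n → Bool) (S : Finset (Finset (Fin n))) (i : Fin n) :
    signv (flip x S) i = signv x i * e S i := by
  unfold signv flip e
  by_cases h : ∃ I ∈ S, i ∈ I <;> by_cases hx : x i <;> simp [h, hx]

lemma e_eq_prod {Q S : Finset (Finset (Fin n))}
    (hQ : (Q : Set (Finset (Fin n))).Pairwise Disjoint)
    (hS : S ⊆ Q) (i : Fin n) :
    e S i = ∏ I ∈ S, (if i ∈ I then (-1 : ℝ) else 1) := by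
  unfold e
  by_cases h : ∃ I ∈ S, i ∈ I
  · obtain ⟨I₀, hI₀S, hiI₀⟩ := h
    rw [if_pos ⟨I₀, hI₀S, hiI₀⟩,
      Finset.prod_eq_single_of_mem I₀ hI₀S (fun J hJ hne => ?_), if_pos hiI₀]
    rw [if_neg]
    intro hiJ
    exact Finset.disjoint_left.mp (hQ (hS hJ) (hS hI₀S) hne) hiJ hiI₀
  · rw [if_neg h, Finset.prod_eq_one]
    intro I hI
    rw [if_neg fun hiI => h ⟨I, hI, hiI⟩]

lemma prod_e_pow {Q S : Finset (Finset (Fin n))}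
    (hQ : (Q : Set (Finset (Fin n))).Pairwise Disjoint)
    (hS : S ⊆ Q) (α : Fin n →₀ ℕ) :
    ∏ i, e S i ^ α i = ∏ I ∈ S, (-1 : ℝ) ^ (∑ i ∈ I, α i) := by
  have : ∀ i, e S i ^ α i = ∏ I ∈ S, (if i ∈ I then (-1 : ℝ) else 1) ^ α i := by
    intro i
    rw [e_eq_prod hQ hS, ← Finset.prod_pow]
  simp only [this]
  rw [Finset.prod_comm]
  refine Finset.prod_congr rfl fun I _ => ?_
  have : ∀ i : Fin n, (if i ∈ I then (-1 : ℝ) else 1) ^ α i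
      = if i ∈ I then (-1 : ℝ) ^ α i else 1 := by
    intro i; split_ifs <;> simp
  simp only [this]
  rw [Finset.prod_ite_mem, Finset.univ_inter, Finset.prod_pow_eq_pow_sum]

lemma sum_key {Q : Finset (Finset (Fin n))}
    (hQ : (Q : Set (Finset (Fin n))).Pairwise Disjoint)
    (α : Fin n →₀ ℕ) (x : Fin n → Bool) :
    ∑ S ∈ Q.powerset, (-1 : ℝ) ^ S.card * ∏ i, signv (flip x S) i ^ α i
      = (if ∀ I ∈ Q, Odd (∑ i ∈ I, α i) then (2 : ℝ) ^ Q.card else 0)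
          * ∏ i, signv x i ^ α i := by
  have step : ∀ S ∈ Q.powerset,
      (-1 : ℝ) ^ S.card * ∏ i, signv (flip x S) i ^ α i
        = ((∏ I ∈ S, (-(-1 : ℝ) ^ (∑ i ∈ I, α i))) * ∏ I ∈ Q \ S, (1 : ℝ))
            * ∏ i, signv x i ^ α i := by
    intro S hS
    rw [Finset.mem_powerset] at hS
    simp only [signv_flip, mul_pow, Finset.prod_mul_distrib, prod_e_pow hQ hS α]
    have hneg : ∏ I ∈ S, (-(-1 : ℝ) ^ (∑ i ∈ I, α i))
        = (-1 : ℝ) ^ S.card * ∏ I ∈ S, (-1 : ℝ) ^ (∑ i ∈ I, α i) := by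
      rw [← Finset.prod_const, ← Finset.prod_mul_distrib]
      exact Finset.prod_congr rfl fun I _ => (neg_one_mul _).symm
    rw [hneg, Finset.prod_const_one]
    ring
  rw [Finset.sum_congr rfl step, ← Finset.sum_mul, ← Finset.prod_add]
  congr 1
  by_cases h : ∀ I ∈ Q, Odd (∑ i ∈ I, α i)
  · rw [if_pos h]
    rw [Finset.prod_congr rfl (fun I hI => ?_), Finset.prod_const]
    rw [Odd.neg_one_pow (h I hI)]
    norm_num
  · rw [if_neg h]
    push_neg at h
    obtain ⟨I, hI, hodd⟩ := h
    refine Finset.prod_eq_zero hI ?_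
    rw [Nat.not_odd_iff_even] at hodd
    rw [hodd.neg_one_pow]
    ring

lemma eval_parityProj {Q : Finset (Finset (Fin n))}
    (hQ : (Q : Set (Finset (Fin n))).Pairwise Disjoint)
    (p : MvPolynomial (Fin n) ℝ) (x : Fin n → Bool) :
    (2 : ℝ) ^ Q.card * eval (signv x) (parityProj Q p)
      = ∑ S ∈ Q.powerset, (-1 : ℝ) ^ S.card * eval (signv (flip x S)) p := by
  conv_rhs => enter [2, S]; rw [eval_eq']
  simp only [Finset.mul_sum]
  rw [Finset.sum_comm' (t' := p.support) (s' := fun _ => Q.powerset)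
    (by intro a b; tauto)]
  unfold parityProj
  rw [map_sum, Finset.mul_sum]
  refine Finset.sum_congr rfl fun α _ => ?_
  have : ∑ S ∈ Q.powerset, (-1 : ℝ) ^ S.card * (coeff α p * ∏ i, signv (flip x S) i ^ α i)
      = coeff α p * ∑ S ∈ Q.powerset, (-1 : ℝ) ^ S.card * ∏ i, signv (flip x S) i ^ α i := by
    rw [Finset.mul_sum]; refine Finset.sum_congr rfl fun S _ => by ring
  rw [this, sum_key hQ α x]
  split_ifs with h
  · rw [eval_monomial, Finsupp.prod_pow]
    ring
  · simp

lemma bddAbove_norm_set (p : MvPolynomial (Fin n) ℝ) :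
    BddAbove {c : ℝ | ∃ x : Fin n → Bool, c = |eval (signv x) p|} := by
  have : {c : ℝ | ∃ x : Fin n → Bool, c = |eval (signv x) p|}
      = Set.range fun x : Fin n → Bool => |eval (signv x) p| := by
    ext c; simp [Set.range, eq_comm]
  rw [this]
  exact (Set.finite_range _).bddAbove

lemma abs_eval_le (p : MvPolynomial (Fin n) ℝ) (x : Fin n → Bool) :
    |eval (signv x) p| ≤ supNorm p :=
  le_csSup (bddAbove_norm_set p) ⟨x, rfl⟩

lemma supNorm_nonneg (p : MvPolynomial (Fin n) ℝ) : 0 ≤ supNorm p :=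
  le_trans (abs_nonneg _) (abs_eval_le p fun _ => true)

end ParityAux

open ParityAux in
/-- The parity projection `Π_Q` is a contraction for the sup norm over the hypercube:
`‖Π_Q p‖_∞ ≤ ‖p‖_∞`. -/
theorem parityProj_supNorm_le (n : ℕ) (Q : Finset (Finset (Fin n)))
    (hQ : (Q : Set (Finset (Fin n))).Pairwise Disjoint)
    (p : MvPolynomial (Fin n) ℝ) :
    supNorm (parityProj Q p) ≤ supNorm p := by
  refine Real.sSup_le ?_ (supNorm_nonneg p)
  rintro c ⟨x, rfl⟩
  have key := eval_parityProj hQ p x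
  have hpos : (0 : ℝ) < 2 ^ Q.card := by positivity
  rw [← mul_le_mul_iff_right₀ hpos]
  calc (2 : ℝ) ^ Q.card * |eval (signv x) (parityProj Q p)|
      = |(2 : ℝ) ^ Q.card * eval (signv x) (parityProj Q p)| := by
        rw [abs_mul, abs_of_pos hpos]
    _ = |∑ S ∈ Q.powerset, (-1 : ℝ) ^ S.card * eval (signv (flip x S)) p| := by rw [key]
    _ ≤ ∑ S ∈ Q.powerset, |(-1 : ℝ) ^ S.card * eval (signv (flip x S)) p| :=
        Finset.abs_sum_le_sum_abs _ _
    _ ≤ ∑ S ∈ Q.powerset, supNorm p := by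
        refine Finset.sum_le_sum fun S _ => ?_
        rw [abs_mul, abs_pow, abs_neg, abs_one, one_pow, one_mul]
        exact abs_eval_le p _
    _ = (2 : ℝ) ^ Q.card * supNorm p := by
        rw [Finset.sum_const, Finset.card_powerset, nsmul_eq_mul]
        push_cast
        ring
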